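/- arXiv:2505.02959 — 5 statements merged into one kernel-verified Lean document; each statement's English description precedes it below -/
import Mathlib

section
/- Let C : ℝ^d → ℝ be increasing, 1-invariant, convex, differentiable, and L-smooth with respect to a norm N. Fix q_0 ∈ ℝ^d and any finite trade history r_0, …, r_T ∈ ℝ^d with q_{t+1} = q_t + r_t. Then there exists an index i ∈ {1, …, d} such that ∑_{t=0}^{T} [⟨∇C(q_t), r_t⟩ + (L/2) N(r_t)²] ≥ (q_{T+1} − q_0)_i, i.e., the Smooth Quadratic Prediction Market satisfies no arbitrage over the whole trade history: there is an outcome under which the total payments collected are at least the total payout ∑_t (r_t)_i. -/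
open scoped RealInnerProductSpace

/-- The all-ones vector `𝟙` in `ℝ^d`. -/
noncomputable def allOnes (d : ℕ) : EuclideanSpace ℝ (Fin d) :=
  (EuclideanSpace.equiv (Fin d) ℝ).symm (fun _ => 1)

/-- the Smooth Quadratic Prediction Market satisfies no arbitrage over a
whole trade history: there is an outcome `i` with
`∑_{t=0}^{T} [⟪∇C(q_t), r_t⟫ + (L/2) N(r_t)²] ≥ (q_{T+1} − q_0)_i`. -/
theorem smooth_quadratic_no_arbitrage_history
    (d : ℕ) (C : EuclideanSpace ℝ (Fin d) → ℝ)
    (hCincr : ∀ q q' : EuclideanSpace ℝ (Fin d),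
      (∀ i, q' i ≤ q i) → q ≠ q' → C q' < C q)
    (hCinv : ∀ (q : EuclideanSpace ℝ (Fin d)) (α : ℝ), C (q + α • allOnes d) = C q + α)
    (hCconv : ConvexOn ℝ Set.univ C)
    (hCdiff : Differentiable ℝ C)
    (N : EuclideanSpace ℝ (Fin d) → ℝ)
    (hN_nonneg : ∀ x, 0 ≤ N x)
    (hN_eq_zero : ∀ x, N x = 0 ↔ x = 0)
    (hN_smul : ∀ (a : ℝ) x, N (a • x) = |a| * N x)
    (hN_add : ∀ x y, N (x + y) ≤ N x + N y)
    (L : ℝ) (hL : 0 ≤ L)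
    (hCsmooth : ∀ x y : EuclideanSpace ℝ (Fin d),
      C x - C y - ⟪gradient C y, x - y⟫ ≤ L / 2 * N (x - y) ^ 2)
    (T : ℕ) (r : ℕ → EuclideanSpace ℝ (Fin d))
    (q : ℕ → EuclideanSpace ℝ (Fin d))
    (hq : ∀ t, q (t + 1) = q t + r t) :
    ∃ i : Fin d,
      ∑ t ∈ Finset.range (T + 1), (⟪gradient C (q t), r t⟫ + L / 2 * N (r t) ^ 2) ≥
        (q (T + 1) - q 0) i := by

  -- handle d = 0
  rcases Nat.eq_zero_or_pos d with hd | hd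
  · exfalso
    have h := hCinv 0 1
    have hz : (0 : EuclideanSpace ℝ (Fin d)) + (1:ℝ) • allOnes d = 0 := by
      subst hd; exact Subsingleton.elim _ _
    rw [hz] at h; linarith
  haveI : Nonempty (Fin d) := Fin.pos_iff_nonempty.mp hd
  set v : EuclideanSpace ℝ (Fin d) := q (T + 1) - q 0 with hv
  obtain ⟨i, -, hi⟩ := Finset.exists_min_image Finset.univ (fun j => v j)
    Finset.univ_nonempty
  refine ⟨i, ?_⟩
  -- step inequality
  have hstep : ∀ t, C (q (t+1)) - C (q t) ≤ ⟪gradient C (q t), r t⟫ + L/2 * N (r t)^2 := by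
    intro t
    have h := hCsmooth (q (t+1)) (q t)
    have hx : q (t+1) - q t = r t := by rw [hq t]; abel
    rw [hx] at h; linarith
  have htel : C (q (T+1)) - C (q 0) ≤
      ∑ t ∈ Finset.range (T + 1), (⟪gradient C (q t), r t⟫ + L / 2 * N (r t) ^ 2) := by
    calc C (q (T+1)) - C (q 0)
        = ∑ t ∈ Finset.range (T + 1), (C (q (t+1)) - C (q t)) := by
          rw [Finset.sum_range_sub (fun t => C (q t))]
      _ ≤ _ := Finset.sum_le_sum (fun t _ => hstep t)
  -- lower bound on C (q (T+1)) - C (q 0)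
  have hones : ∀ j : Fin d, allOnes d j = 1 := fun j => rfl
  have hge : ∀ j : Fin d, (q 0 + v i • allOnes d) j ≤ q (T+1) j := by
    intro j
    have h1 := hi j (Finset.mem_univ j)
    have h2 : v j = q (T+1) j - q 0 j := by simp [hv]
    have h3 : (q 0 + v i • allOnes d) j = q 0 j + v i := by
      simp [hones j]
    rw [h3]; linarith [h1, h2.le]
  have hkey : C (q 0) + v i ≤ C (q (T+1)) := by
    rw [← hCinv (q 0) (v i)]
    by_cases he : q (T+1) = q 0 + v i • allOnes d
    · rw [he]
    · exact (hCincr (q (T+1)) (q 0 + v i • allOnes d) hge he).le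
  show _ ≥ v i
  linarith
end

section
/- Let C : ℝ^d → ℝ be convex and differentiable, let μ ∈ ℝ^d, q ∈ ℝ^d, and L > 0. Then the function r ↦ ⟨∇C(q) − μ, r⟩ + (L/2)‖r‖₂² on ℝ^d has the unique minimizer r* = −(1/L)(∇C(q) − μ). Hence in the ℓ₂-based Smooth Quadratic Prediction Market, an expectation-maximizing trader with belief μ at state q moves the state to q − (1/L)(∇C(q) − μ), which is exactly one gradient-descent step with stepsize 1/L on the function C̄(x) = C(x) − ⟨μ, x⟩. -/
open scoped RealInnerProductSpace

lemma sq_key {E : Type*} [NormedAddCommGroup E] [InnerProductSpace ℝ E]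
    (g r : E) (L : ℝ) (hL : 0 < L) :
    ⟪g, r⟫ + L / 2 * ‖r‖ ^ 2 =
      (⟪g, -(L⁻¹ • g)⟫ + L / 2 * ‖-(L⁻¹ • g)‖ ^ 2) + L / 2 * ‖r + L⁻¹ • g‖ ^ 2 := by
  have h1 : ‖r + L⁻¹ • g‖ ^ 2 = ‖r‖ ^ 2 + 2 * ⟪r, L⁻¹ • g⟫ + ‖L⁻¹ • g‖ ^ 2 := by
    rw [← norm_add_sq_real]
  have h2 : ⟪r, L⁻¹ • g⟫ = L⁻¹ * ⟪g, r⟫ := by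
    rw [real_inner_smul_right, real_inner_comm]
  have h3 : ⟪g, -(L⁻¹ • g)⟫ = -(L⁻¹ * ‖g‖ ^ 2) := by
    rw [inner_neg_right, real_inner_smul_right, real_inner_self_eq_norm_sq]
  have h4 : ‖-(L⁻¹ • g)‖ ^ 2 = L⁻¹ ^ 2 * ‖g‖ ^ 2 := by
    rw [norm_neg, norm_smul]
    simp [mul_pow, abs_of_pos (inv_pos.mpr hL)]
  have h5 : ‖L⁻¹ • g‖ ^ 2 = L⁻¹ ^ 2 * ‖g‖ ^ 2 := by
    rw [norm_smul]
    simp [mul_pow, abs_of_pos (inv_pos.mpr hL)]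
  rw [h1, h2, h3, h4, h5]
  field_simp
  ring

lemma grad_sub_inner {E : Type*} [NormedAddCommGroup E] [InnerProductSpace ℝ E]
    [CompleteSpace E]
    (C : E → ℝ) (hCdiff : Differentiable ℝ C) (μ q : E) :
    gradient (fun x => C x - ⟪μ, x⟫) q = gradient C q - μ := by
  have hC : HasGradientAt C (gradient C q) q := (hCdiff q).hasGradientAt
  have hCf : HasFDerivAt C (InnerProductSpace.toDual ℝ E (gradient C q)) q :=
    hC.hasFDerivAt
  have hμ : HasFDerivAt (fun x => ⟪μ, x⟫) (InnerProductSpace.toDual ℝ E μ) q := by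
    convert (InnerProductSpace.toDual ℝ E μ).hasFDerivAt (x := q) using 1
    ext x
    simp [InnerProductSpace.toDual_apply_apply]
  have hsub : HasFDerivAt (fun x => C x - ⟪μ, x⟫)
      (InnerProductSpace.toDual ℝ E (gradient C q - μ)) q := by
    have := hCf.sub hμ
    rw [map_sub]
    exact this
  have : HasGradientAt (fun x => C x - ⟪μ, x⟫) (gradient C q - μ) q :=
    (hasGradientAt_iff_hasFDerivAt).mpr hsub
  exact this.gradient

/-- in the ℓ₂-based Smooth Quadratic Prediction Market, the function
`r ↦ ⟪∇C(q) − μ, r⟫ + (L/2)‖r‖₂²` has the unique minimizer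
`r* = −(1/L)(∇C(q) − μ)`; hence the trader moves the state to
`q − (1/L)(∇C(q) − μ)`, one gradient-descent step with stepsize `1/L` on
`C̄(x) = C(x) − ⟪μ, x⟫`. -/
theorem smooth_quadratic_l2_unique_minimizer_is_gradient_step
    (d : ℕ) (C : EuclideanSpace ℝ (Fin d) → ℝ)
    (hCconv : ConvexOn ℝ Set.univ C)
    (hCdiff : Differentiable ℝ C)
    (μ q : EuclideanSpace ℝ (Fin d)) (L : ℝ) (hL : 0 < L)
    (rstar : EuclideanSpace ℝ (Fin d))
    (hrstar : rstar = -(L⁻¹ • (gradient C q - μ))) :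
    (∀ r : EuclideanSpace ℝ (Fin d),
        ⟪gradient C q - μ, rstar⟫ + L / 2 * ‖rstar‖ ^ 2 ≤
          ⟪gradient C q - μ, r⟫ + L / 2 * ‖r‖ ^ 2) ∧
      (∀ r : EuclideanSpace ℝ (Fin d),
        (∀ r' : EuclideanSpace ℝ (Fin d),
          ⟪gradient C q - μ, r⟫ + L / 2 * ‖r‖ ^ 2 ≤
            ⟪gradient C q - μ, r'⟫ + L / 2 * ‖r'‖ ^ 2) → r = rstar) ∧
      q + rstar = q - L⁻¹ • gradient (fun x => C x - ⟪μ, x⟫) q := by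
  set g := gradient C q - μ with hg
  have key : ∀ r : EuclideanSpace ℝ (Fin d),
      ⟪g, r⟫ + L / 2 * ‖r‖ ^ 2 =
        (⟪g, rstar⟫ + L / 2 * ‖rstar‖ ^ 2) + L / 2 * ‖r + L⁻¹ • g‖ ^ 2 := by
    intro r
    rw [hrstar]
    exact sq_key g r L hL
  refine ⟨?_, ?_, ?_⟩
  · intro r
    rw [key r]
    nlinarith [norm_nonneg (r + L⁻¹ • g), sq_nonneg ‖r + L⁻¹ • g‖,
      mul_nonneg (by linarith : (0:ℝ) ≤ L / 2) (sq_nonneg ‖r + L⁻¹ • g‖)]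
  · intro r hr
    have h := hr rstar
    rw [key r] at h
    have hz : ‖r + L⁻¹ • g‖ ^ 2 ≤ 0 := by
      nlinarith
    have : ‖r + L⁻¹ • g‖ = 0 := by
      nlinarith [sq_nonneg ‖r + L⁻¹ • g‖, norm_nonneg (r + L⁻¹ • g)]
    have : r + L⁻¹ • g = 0 := norm_eq_zero.mp this
    rw [hrstar]
    linear_combination (norm := module) this
  · rw [grad_sub_inner C hCdiff μ q, hrstar, ← hg]
    module
end

section
/- Let N₁, N₂ : ℝ^d → ℝ be norms. Let f : ℝ^d → ℝ be differentiable, μ-strongly convex with respect to N₁, and convex and L-smooth with respect to N₂, with μ, L > 0. Let x* be a global minimizer of f, fix x ∈ ℝ^d, and let y* be a minimizer of y ↦ f(x) + ⟨∇f(x), y − x⟩ + (L/2) N₂(y − x)² over ℝ^d. Then N₁(y* − x*)² ≤ (L/μ) N₂(x − x*)². -/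
open scoped RealInnerProductSpace

/-- for `f` that is `μ`-strongly convex w.r.t. `N₁` and convex and
`L`-smooth w.r.t. `N₂`, with global minimizer `x*`, and `y*` the steepest descent step
from `x` w.r.t. `N₂`, we have `N₁(y* − x*)² ≤ (L/μ) N₂(x − x*)²`. -/
theorem steepest_descent_step_distance_bound
    (d : ℕ) (N₁ N₂ : EuclideanSpace ℝ (Fin d) → ℝ)
    (hN₁_nonneg : ∀ x, 0 ≤ N₁ x)
    (hN₁_eq_zero : ∀ x, N₁ x = 0 ↔ x = 0)
    (hN₁_smul : ∀ (a : ℝ) x, N₁ (a • x) = |a| * N₁ x)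
    (hN₁_add : ∀ x y, N₁ (x + y) ≤ N₁ x + N₁ y)
    (hN₂_nonneg : ∀ x, 0 ≤ N₂ x)
    (hN₂_eq_zero : ∀ x, N₂ x = 0 ↔ x = 0)
    (hN₂_smul : ∀ (a : ℝ) x, N₂ (a • x) = |a| * N₂ x)
    (hN₂_add : ∀ x y, N₂ (x + y) ≤ N₂ x + N₂ y)
    (f : EuclideanSpace ℝ (Fin d) → ℝ)
    (hfconv : ConvexOn ℝ Set.univ f)
    (hfdiff : Differentiable ℝ f)
    (μ L : ℝ) (hμ : 0 < μ) (hL : 0 < L)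
    (hfstrong : ∀ x y : EuclideanSpace ℝ (Fin d),
      μ / 2 * N₁ (x - y) ^ 2 ≤ f x - f y - ⟪gradient f y, x - y⟫)
    (hfsmooth : ∀ x y : EuclideanSpace ℝ (Fin d),
      f x - f y - ⟪gradient f y, x - y⟫ ≤ L / 2 * N₂ (x - y) ^ 2)
    (xstar : EuclideanSpace ℝ (Fin d)) (hxstar : ∀ y, f xstar ≤ f y)
    (x ystar : EuclideanSpace ℝ (Fin d))
    (hystar : ∀ y : EuclideanSpace ℝ (Fin d),
      f x + ⟪gradient f x, ystar - x⟫ + L / 2 * N₂ (ystar - x) ^ 2 ≤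
        f x + ⟪gradient f x, y - x⟫ + L / 2 * N₂ (y - x) ^ 2) :
    N₁ (ystar - xstar) ^ 2 ≤ L / μ * N₂ (x - xstar) ^ 2 := by

  set g := gradient f xstar with hgdef
  -- gradient at minimizer is zero
  have hg : g = 0 := by
    by_contra hne
    have hNg : 0 < N₂ g := lt_of_le_of_ne (hN₂_nonneg g) (fun h => hne ((hN₂_eq_zero g).mp h.symm))
    have hgn : 0 < ‖g‖ ^ 2 := pow_pos (norm_pos_iff.mpr hne) 2
    set t : ℝ := ‖g‖ ^ 2 / (L * (N₂ g) ^ 2) with htdef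
    have ht : 0 < t := div_pos hgn (by positivity)
    have h1 := hfsmooth (xstar - t • g) xstar
    have h2 := hxstar (xstar - t • g)
    have hsub : xstar - t • g - xstar = (-t) • g := by
      simp [neg_smul]
    rw [hsub] at h1
    have hinner : ⟪g, (-t) • g⟫ = -t * ‖g‖ ^ 2 := by
      rw [real_inner_smul_right, real_inner_self_eq_norm_sq]
    have hN : N₂ ((-t) • g) = t * N₂ g := by
      rw [hN₂_smul, abs_neg, abs_of_pos ht]
    rw [hinner, hN] at h1
    have hle : t * ‖g‖ ^ 2 ≤ L / 2 * (t * N₂ g) ^ 2 := by linarith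
    have htval : L * (N₂ g) ^ 2 * t = ‖g‖ ^ 2 := by
      rw [htdef]
      field_simp [hL.ne', hNg.ne']
    nlinarith [hle, ht, hgn]
  -- main chain
  have hstrong := hfstrong ystar xstar
  rw [← hgdef, hg] at hstrong
  simp only [inner_zero_left] at hstrong
  have hsm := hfsmooth ystar x
  have hys := hystar xstar
  have hconv := hfstrong xstar x
  have hN1nn := hN₁_nonneg (xstar - x)
  have hflip : N₂ (xstar - x) = N₂ (x - xstar) := by
    have := hN₂_smul (-1) (x - xstar)
    simpa [neg_sub] using this
  have hmin := hxstar ystar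
  rw [hflip] at hys
  have key : μ / 2 * N₁ (ystar - xstar) ^ 2 ≤ L / 2 * N₂ (x - xstar) ^ 2 := by
    have h3 : μ / 2 * N₁ (xstar - x) ^ 2 ≥ 0 := by positivity
    linarith
  have hdiv : 0 < μ := hμ
  rw [div_mul_eq_mul_div, le_div_iff₀ hdiv]
  nlinarith [key]
end

section
/- Let d ≥ 1 and let R : Δ_d → ℝ be continuous. Define C(q) = max_{p ∈ Δ_d} (⟨q, p⟩ − R(p)) for q ∈ ℝ^d. Then for every q ∈ ℝ^d, max_{1 ≤ i ≤ d} q_i − (C(q) − C(0)) ≤ max_{1 ≤ i ≤ d} R(e_i) − min_{p ∈ Δ_d} R(p). That is, the worst-case loss of the Duality-based Cost Function Market Maker started at state 0 is at most R_max − R_min, where R_max is the maximum of R over the vertices of the simplex and R_min is its minimum over the simplex. -/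
open scoped RealInnerProductSpace

/-- The probability simplex `Δ_d ⊆ ℝ^d`. -/
def probSimplex (d : ℕ) : Set (EuclideanSpace ℝ (Fin d)) :=
  {p | (∀ i, 0 ≤ p i) ∧ ∑ i, p i = 1}

lemma probSimplex_compact (d : ℕ) : IsCompact (probSimplex d) := by
  have h := isCompact_stdSimplex ℝ (Fin d)
  have h2 := h.image (EuclideanSpace.equiv (Fin d) ℝ).symm.toHomeomorph.continuous
  convert h2 using 1
  ext p
  constructor
  · rintro ⟨h1, h2⟩
    exact ⟨EuclideanSpace.equiv (Fin d) ℝ p, ⟨h1, h2⟩, rfl⟩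
  · rintro ⟨x, ⟨hx1, hx2⟩, rfl⟩
    exact ⟨hx1, hx2⟩

lemma single_mem_probSimplex {d : ℕ} (j : Fin d) :
    EuclideanSpace.single j (1 : ℝ) ∈ probSimplex d := by
  constructor
  · intro i
    rw [EuclideanSpace.single_apply]
    split <;> norm_num
  · simp [EuclideanSpace.single_apply]

/-- the worst-case loss of the DCFMM with cost
`C(q) = max_{p ∈ Δ_d} (⟪q, p⟫ − R(p))`, started at state `0`, is at most
`R_max − R_min`: for every `q`,
`max_i q_i − (C(q) − C(0)) ≤ max_i R(e_i) − min_{p ∈ Δ_d} R(p)`. -/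
theorem dcfmm_worst_case_loss_bound
    (d : ℕ) (hd : 1 ≤ d)
    (R : EuclideanSpace ℝ (Fin d) → ℝ)
    (hR : ContinuousOn R (probSimplex d))
    (C : EuclideanSpace ℝ (Fin d) → ℝ)
    (hC : ∀ q, C q = sSup ((fun p => ⟪q, p⟫ - R p) '' probSimplex d)) :
    ∀ q : EuclideanSpace ℝ (Fin d),
      (⨆ i : Fin d, q i) - (C q - C 0) ≤
        (⨆ i : Fin d, R (EuclideanSpace.single i (1 : ℝ))) -
          sInf (R '' probSimplex d) := by
  intro q
  haveI : Nonempty (Fin d) := Fin.pos_iff_nonempty.mp hd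
  have hcomp := probSimplex_compact d
  have hRim : IsCompact (R '' probSimplex d) := hcomp.image_of_continuousOn hR
  have hbelow : BddBelow (R '' probSimplex d) := hRim.bddBelow
  -- bound on sup of R at vertices
  have hbdd : BddAbove (Set.range fun i : Fin d => R (EuclideanSpace.single i (1 : ℝ))) :=
    (Set.finite_range _).bddAbove
  -- For each q, image set is bounded above
  have hbA : ∀ q' : EuclideanSpace ℝ (Fin d),
      BddAbove ((fun p => ⟪q', p⟫ - R p) '' probSimplex d) := by
    intro q'
    refine (hcomp.image_of_continuousOn ?_).bddAbove
    exact ((continuous_inner.comp (Continuous.prodMk_right q')).continuousOn).sub hR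
  -- Step A: sup q_i ≤ C q + sup R(e_i)
  have hA : (⨆ i : Fin d, q i) ≤ C q + ⨆ i : Fin d, R (EuclideanSpace.single i (1 : ℝ)) := by
    apply ciSup_le
    intro j
    have hmem : ⟪q, EuclideanSpace.single j (1 : ℝ)⟫ - R (EuclideanSpace.single j (1 : ℝ))
        ∈ (fun p => ⟪q, p⟫ - R p) '' probSimplex d :=
      ⟨_, single_mem_probSimplex j, rfl⟩
    have h1 : ⟪q, EuclideanSpace.single j (1 : ℝ)⟫ - R (EuclideanSpace.single j (1 : ℝ)) ≤ C q := by
      rw [hC]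
      exact le_csSup (hbA q) hmem
    have h2 : ⟪q, EuclideanSpace.single j (1 : ℝ)⟫ = q j := by
      rw [EuclideanSpace.inner_single_right]
      simp
    have h3 : R (EuclideanSpace.single j (1 : ℝ)) ≤
        ⨆ i : Fin d, R (EuclideanSpace.single i (1 : ℝ)) := le_ciSup hbdd j
    linarith
  -- Step B: C 0 ≤ - sInf (R '' Δ)
  have hB : C 0 ≤ - sInf (R '' probSimplex d) := by
    rw [hC]
    apply csSup_le
    · exact ⟨_, ⟨_, single_mem_probSimplex ⟨0, hd⟩, rfl⟩⟩
    · rintro x ⟨p, hp, rfl⟩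
      have : sInf (R '' probSimplex d) ≤ R p := csInf_le hbelow ⟨p, hp, rfl⟩
      simp only [inner_zero_left]
      linarith
  linarith
end

section
/- Let N : ℝ^d → ℝ be a norm, L > 0, and let C° : ℝ^d × ℝ → ℝ be such that: (i) for every v ∈ ℝ, the map q ↦ C°(q, v) is increasing, 1-invariant, convex, differentiable, and L-smooth with respect to N; and (ii) for every q ∈ ℝ^d, the map v ↦ C°(q, v) is nondecreasing. Let g : ℝ^d → ℝ satisfy g(r) ≥ 0 for all r. Fix q_0 ∈ ℝ^d, v_0 ∈ ℝ, and bundles r_0, …, r_T ∈ ℝ^d, and set q_{t+1} = q_t + r_t and v_{t+1} = v_t + g(r_t). Define the volume-parameterized smooth quadratic payment Pay_{L°}(q_t, r_t; v_t) = ⟨∇_q C°(q_t, v_{t+1}), r_t⟩ + (L/2) N(r_t)² + (C°(q_t, v_{t+1}) − C°(q_t, v_t)). Then there exists an index i ∈ {1, …, d} such that ∑_{t=0}^{T} Pay_{L°}(q_t, r_t; v_t) ≥ (q_{T+1} − q_0)_i; i.e., the volume-parameterized Smooth Quadratic Prediction Market satisfies no arbitrage over the whole trade history. -/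
open scoped RealInnerProductSpace

/-- the volume-parameterized Smooth Quadratic Prediction Market, with
payment `Pay_{L°}(q_t, r_t; v_t) = ⟪∇_q C°(q_t, v_{t+1}), r_t⟫ + (L/2) N(r_t)² +
(C°(q_t, v_{t+1}) − C°(q_t, v_t))`, satisfies no arbitrage over the whole trade
history: there is an outcome `i` with `∑_{t=0}^{T} Pay ≥ (q_{T+1} − q_0)_i`. -/
theorem vpm_smooth_quadratic_no_arbitrage
    (d : ℕ) (N : EuclideanSpace ℝ (Fin d) → ℝ)
    (hN_nonneg : ∀ x, 0 ≤ N x)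
    (hN_eq_zero : ∀ x, N x = 0 ↔ x = 0)
    (hN_smul : ∀ (a : ℝ) x, N (a • x) = |a| * N x)
    (hN_add : ∀ x y, N (x + y) ≤ N x + N y)
    (L : ℝ) (hL : 0 < L)
    (Cc : EuclideanSpace ℝ (Fin d) → ℝ → ℝ)
    (hCincr : ∀ (v : ℝ) (q q' : EuclideanSpace ℝ (Fin d)),
      (∀ i, q' i ≤ q i) → q ≠ q' → Cc q' v < Cc q v)
    (hCinv : ∀ (v : ℝ) (q : EuclideanSpace ℝ (Fin d)) (α : ℝ),
      Cc (q + α • allOnes d) v = Cc q v + α)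
    (hCconv : ∀ v : ℝ, ConvexOn ℝ Set.univ (fun q => Cc q v))
    (hCdiff : ∀ v : ℝ, Differentiable ℝ (fun q => Cc q v))
    (hCsmooth : ∀ (v : ℝ) (x y : EuclideanSpace ℝ (Fin d)),
      Cc x v - Cc y v - ⟪gradient (fun z => Cc z v) y, x - y⟫ ≤ L / 2 * N (x - y) ^ 2)
    (hCmono : ∀ q : EuclideanSpace ℝ (Fin d), Monotone (fun v => Cc q v))
    (g : EuclideanSpace ℝ (Fin d) → ℝ) (hg : ∀ r, 0 ≤ g r)
    (T : ℕ) (r : ℕ → EuclideanSpace ℝ (Fin d))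
    (q : ℕ → EuclideanSpace ℝ (Fin d)) (v : ℕ → ℝ)
    (hq : ∀ t, q (t + 1) = q t + r t)
    (hv : ∀ t, v (t + 1) = v t + g (r t)) :
    ∃ i : Fin d,
      ∑ t ∈ Finset.range (T + 1),
        (⟪gradient (fun z => Cc z (v (t + 1))) (q t), r t⟫ + L / 2 * N (r t) ^ 2 +
          (Cc (q t) (v (t + 1)) - Cc (q t) (v t))) ≥
        (q (T + 1) - q 0) i := by

  -- degenerate case d = 0 is impossible by 1-invariance
  rcases Nat.eq_zero_or_pos d with hd | hd
  · exfalso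
    have h := hCinv 0 (q 0) 1
    have hz : q 0 + (1 : ℝ) • allOnes d = q 0 := by
      ext i; subst hd; exact i.elim0
    rw [hz] at h; linarith
  -- volume is nondecreasing in t
  have hvmono : ∀ t, v 0 ≤ v t := by
    intro t
    induction t with
    | zero => exact le_refl _
    | succ n ih => rw [hv n]; have := hg (r n); linarith
  -- each step payment dominates the potential increment
  have hstep : ∀ n, Cc (q (n + 1)) (v (n + 1)) - Cc (q n) (v n) ≤
      ⟪gradient (fun z => Cc z (v (n + 1))) (q n), r n⟫ + L / 2 * N (r n) ^ 2 +
        (Cc (q n) (v (n + 1)) - Cc (q n) (v n)) := by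
    intro n
    have hsm := hCsmooth (v (n + 1)) (q (n + 1)) (q n)
    have hr : q (n + 1) - q n = r n := by rw [hq n]; abel
    rw [hr] at hsm
    linarith
  -- telescoping
  have htel : ∀ n, Cc (q n) (v n) - Cc (q 0) (v 0) ≤
      ∑ t ∈ Finset.range n,
        (⟪gradient (fun z => Cc z (v (t + 1))) (q t), r t⟫ + L / 2 * N (r t) ^ 2 +
          (Cc (q t) (v (t + 1)) - Cc (q t) (v t))) := by
    intro n
    induction n with
    | zero => simp
    | succ n ih =>
      rw [Finset.sum_range_succ]
      have := hstep n
      linarith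
  -- choose the minimizing coordinate
  obtain ⟨i, -, hi⟩ := Finset.exists_min_image (Finset.univ : Finset (Fin d))
    (fun j => (q (T + 1) - q 0) j) ⟨⟨0, hd⟩, Finset.mem_univ _⟩
  refine ⟨i, ?_⟩
  set α := (q (T + 1) - q 0) i with hα
  have hcomp : ∀ j, (q 0 + α • allOnes d) j ≤ q (T + 1) j := by
    intro j
    have h1 : (q 0 + α • allOnes d) j = q 0 j + α := by
      simp [allOnes, EuclideanSpace.equiv]
    have h2 : α ≤ (q (T + 1) - q 0) j := hi j (Finset.mem_univ j)
    have h3 : (q (T + 1) - q 0) j = q (T + 1) j - q 0 j := by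
      simp
    rw [h1]; linarith [h2, h3 ▸ h2]
  have hlow : Cc (q 0) (v 0) + α ≤ Cc (q (T + 1)) (v 0) := by
    rw [← hCinv (v 0) (q 0) α]
    rcases eq_or_ne (q (T + 1)) (q 0 + α • allOnes d) with he | he
    · rw [he]
    · exact le_of_lt (hCincr (v 0) (q (T + 1)) (q 0 + α • allOnes d) hcomp he)
  have hvmono' : Cc (q (T + 1)) (v 0) ≤ Cc (q (T + 1)) (v (T + 1)) :=
    hCmono (q (T + 1)) (hvmono (T + 1))
  have := htel (T + 1)
  show _ ≥ α
  linarith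
end
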